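/- Emptiness criterion for a trinomial in a quadrant (from Proposition 1.2.BG and its proof): Let a(x,y) = a₁x^{i₁}y^{j₁} + a₂x^{i₂}y^{j₂} + a₃x^{i₃}y^{j₃} be a real trinomial with a₁,a₂,a₃ ≠ 0 whose exponent vectors (i₁,j₁),(i₂,j₂),(i₃,j₃) ∈ ℤ² are affinely independent. Fix ε,δ ∈ {+1,−1} and let Q_{ε,δ} = {(x,y) ∈ ℝ² : εx > 0, δy > 0} be the corresponding open quadrant. Then a has no zeros in Q_{ε,δ} if and only if the three signs σ_k = sign(a_k·ε^{i_k}·δ^{j_k}), k = 1,2,3, are all equal. -/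

import Mathlib

private lemma exp_zpow_aux (i : ℤ) (s : ℝ) : Real.exp s ^ i = Real.exp (i * s) := by
  rw [← Real.rpow_intCast, Real.rpow_def_of_pos (Real.exp_pos s), Real.log_exp, mul_comm]

/-- Key construction: if `A > 0` and `B < 0` then `A + B u + C v = 0` has a
solution with `u, v > 0`. -/
private lemma key_aux (A B C : ℝ) (hA : 0 < A) (hB : B < 0) :
    ∃ u v : ℝ, 0 < u ∧ 0 < v ∧ A + B * u + C * v = 0 := by
  set v : ℝ := A / (2 * (|C| + 1)) with hv
  have hden : 0 < 2 * (|C| + 1) := by positivity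
  have hv0 : 0 < v := div_pos hA hden
  have hCv : |C * v| < A := by
    have h : (|C| + 1) * v = A / 2 := by rw [hv]; field_simp
    rw [abs_mul, abs_of_pos hv0]
    nlinarith [abs_nonneg C]
  have hpos : 0 < A + C * v := by
    have := neg_lt_of_abs_lt hCv
    linarith
  refine ⟨-(A + C * v) / B, v, ?_, hv0, ?_⟩
  · exact div_pos_of_neg_of_neg (by linarith) hB
  · rw [mul_div_cancel₀ _ hB.ne]
    ring

private lemma sign_ne_aux (A B : ℝ) (hA : 0 < A) (hB : B < 0) :
    Real.sign A ≠ Real.sign B := by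
  rw [Real.sign_of_pos hA, Real.sign_of_neg hB]; norm_num

/-- Emptiness criterion for a trinomial in a quadrant (Proposition 1.2.BG):
a real trinomial with affinely independent exponent vectors has no zeros in the
open quadrant `Q_{ε,δ}` if and only if the three signs
`σ_k = sign(a_k·ε^{i_k}·δ^{j_k})` coincide. -/
theorem trinomial_no_zero_in_quadrant_iff
    (a₁ a₂ a₃ : ℝ) (i₁ j₁ i₂ j₂ i₃ j₃ : ℤ) (ε δ : ℝ)
    (ha₁ : a₁ ≠ 0) (ha₂ : a₂ ≠ 0) (ha₃ : a₃ ≠ 0)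
    (hε : ε = 1 ∨ ε = -1) (hδ : δ = 1 ∨ δ = -1)
    (hindep : (i₂ - i₁) * (j₃ - j₁) - (i₃ - i₁) * (j₂ - j₁) ≠ 0) :
    (∀ x y : ℝ, 0 < ε * x → 0 < δ * y →
        a₁ * x ^ i₁ * y ^ j₁ + a₂ * x ^ i₂ * y ^ j₂ + a₃ * x ^ i₃ * y ^ j₃ ≠ 0) ↔
      (Real.sign (a₁ * ε ^ i₁ * δ ^ j₁) = Real.sign (a₂ * ε ^ i₂ * δ ^ j₂) ∧
       Real.sign (a₂ * ε ^ i₂ * δ ^ j₂) = Real.sign (a₃ * ε ^ i₃ * δ ^ j₃)) := by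
  have hε0 : ε ≠ 0 := by rcases hε with h | h <;> rw [h] <;> norm_num
  have hδ0 : δ ≠ 0 := by rcases hδ with h | h <;> rw [h] <;> norm_num
  have hε2 : ε * ε = 1 := by rcases hε with h | h <;> rw [h] <;> norm_num
  have hδ2 : δ * δ = 1 := by rcases hδ with h | h <;> rw [h] <;> norm_num
  set A : ℝ := a₁ * ε ^ i₁ * δ ^ j₁ with hAdef
  set B : ℝ := a₂ * ε ^ i₂ * δ ^ j₂ with hBdef
  set C : ℝ := a₃ * ε ^ i₃ * δ ^ j₃ with hCdef
  have hA0 : A ≠ 0 := mul_ne_zero (mul_ne_zero ha₁ (zpow_ne_zero _ hε0)) (zpow_ne_zero _ hδ0)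
  have hB0 : B ≠ 0 := mul_ne_zero (mul_ne_zero ha₂ (zpow_ne_zero _ hε0)) (zpow_ne_zero _ hδ0)
  have hC0 : C ≠ 0 := mul_ne_zero (mul_ne_zero ha₃ (zpow_ne_zero _ hε0)) (zpow_ne_zero _ hδ0)
  -- the basic term identity on the quadrant
  have key : ∀ (a : ℝ) (i j : ℤ) (x y : ℝ),
      a * x ^ i * y ^ j = (a * ε ^ i * δ ^ j) * ((ε * x) ^ i * (δ * y) ^ j) := by
    intro a i j x y
    have h1 : ε ^ i * ε ^ i = 1 := by rw [← mul_zpow, hε2, one_zpow]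
    have h2 : δ ^ j * δ ^ j = 1 := by rw [← mul_zpow, hδ2, one_zpow]
    rw [mul_zpow ε x i, mul_zpow δ y j]
    linear_combination (-(a * x ^ i * y ^ j * (δ ^ j * δ ^ j))) * h1 +
      (-(a * x ^ i * y ^ j)) * h2
  constructor
  · -- no zeros → signs coincide; prove contrapositive
    intro hnz
    by_contra hsigns
    -- produce u v > 0 with A + B u + C v = 0, by sign cases
    have huv : ∃ u v : ℝ, 0 < u ∧ 0 < v ∧ A + B * u + C * v = 0 := by
      rcases hA0.lt_or_gt with hA | hA <;> rcases hB0.lt_or_gt with hB | hB <;>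
        rcases hC0.lt_or_gt with hC | hC
      · -- all negative: contradiction
        exfalso; apply hsigns
        rw [Real.sign_of_neg hA, Real.sign_of_neg hB, Real.sign_of_neg hC]; exact ⟨rfl, rfl⟩
      · -- A<0 B<0 C>0
        obtain ⟨u, v, hu, hv, h⟩ := key_aux (-A) (-C) (-B) (by linarith) (by linarith)
        exact ⟨v, u, hv, hu, by linarith⟩
      · -- A<0 B>0
        obtain ⟨u, v, hu, hv, h⟩ := key_aux (-A) (-B) (-C) (by linarith) (by linarith)
        exact ⟨u, v, hu, hv, by linarith⟩
      · obtain ⟨u, v, hu, hv, h⟩ := key_aux (-A) (-B) (-C) (by linarith) (by linarith)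
        exact ⟨u, v, hu, hv, by linarith⟩
      · -- A>0 B<0
        obtain ⟨u, v, hu, hv, h⟩ := key_aux A B C hA hB
        exact ⟨u, v, hu, hv, h⟩
      · obtain ⟨u, v, hu, hv, h⟩ := key_aux A B C hA hB
        exact ⟨u, v, hu, hv, h⟩
      · -- A>0 B>0 C<0
        obtain ⟨u, v, hu, hv, h⟩ := key_aux A C B hA hC
        exact ⟨v, u, hv, hu, by linarith⟩
      · -- all positive: contradiction
        exfalso; apply hsigns
        rw [Real.sign_of_pos hA, Real.sign_of_pos hB, Real.sign_of_pos hC]; exact ⟨rfl, rfl⟩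
    obtain ⟨u, v, hu, hv, huv0⟩ := huv
    -- solve the linear system for the exponents
    set D : ℝ := (((i₂ - i₁) * (j₃ - j₁) - (i₃ - i₁) * (j₂ - j₁) : ℤ) : ℝ) with hDdef
    have hD : D ≠ 0 := by
      rw [hDdef]; exact_mod_cast hindep
    set L : ℝ := Real.log u with hL
    set M : ℝ := Real.log v with hM
    set s : ℝ := (((j₃ - j₁ : ℤ) : ℝ) * L - ((j₂ - j₁ : ℤ) : ℝ) * M) / D with hs
    set t : ℝ := (((i₂ - i₁ : ℤ) : ℝ) * M - ((i₃ - i₁ : ℤ) : ℝ) * L) / D with ht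
    have hsol2 : ((i₂ - i₁ : ℤ) : ℝ) * s + ((j₂ - j₁ : ℤ) : ℝ) * t = L := by
      rw [hs, ht]
      field_simp
      rw [hDdef]
      push_cast
      ring
    have hsol3 : ((i₃ - i₁ : ℤ) : ℝ) * s + ((j₃ - j₁ : ℤ) : ℝ) * t = M := by
      rw [hs, ht]
      field_simp
      rw [hDdef]
      push_cast
      ring
    -- the zero point
    set x : ℝ := ε * Real.exp s with hx
    set y : ℝ := δ * Real.exp t with hy
    have hεx : ε * x = Real.exp s := by rw [hx, ← mul_assoc, hε2, one_mul]
    have hδy : δ * y = Real.exp t := by rw [hy, ← mul_assoc, hδ2, one_mul]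
    have e2 : (i₂ : ℝ) * s + (j₂ : ℝ) * t = ((i₁ : ℝ) * s + (j₁ : ℝ) * t) + L := by
      push_cast at hsol2; linarith
    have e3 : (i₃ : ℝ) * s + (j₃ : ℝ) * t = ((i₁ : ℝ) * s + (j₁ : ℝ) * t) + M := by
      push_cast at hsol3; linarith
    refine hnz x y (hεx ▸ Real.exp_pos s) (hδy ▸ Real.exp_pos t) ?_
    rw [key a₁ i₁ j₁ x y, key a₂ i₂ j₂ x y, key a₃ i₃ j₃ x y, hεx, hδy,
      exp_zpow_aux, exp_zpow_aux, exp_zpow_aux, exp_zpow_aux, exp_zpow_aux, exp_zpow_aux]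
    have t1 : Real.exp ((i₁ : ℝ) * s) * Real.exp ((j₁ : ℝ) * t) =
        Real.exp ((i₁ : ℝ) * s + (j₁ : ℝ) * t) := (Real.exp_add _ _).symm
    have t2 : Real.exp ((i₂ : ℝ) * s) * Real.exp ((j₂ : ℝ) * t) =
        Real.exp ((i₁ : ℝ) * s + (j₁ : ℝ) * t) * u := by
      rw [← Real.exp_add, e2, Real.exp_add, hL, Real.exp_log hu]
    have t3 : Real.exp ((i₃ : ℝ) * s) * Real.exp ((j₃ : ℝ) * t) =
        Real.exp ((i₁ : ℝ) * s + (j₁ : ℝ) * t) * v := by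
      rw [← Real.exp_add, e3, Real.exp_add, hM, Real.exp_log hv]
    rw [t1, t2, t3]
    linear_combination Real.exp ((i₁ : ℝ) * s + (j₁ : ℝ) * t) * huv0
  · -- signs coincide → no zeros
    rintro ⟨h12, h23⟩ x y hεx hδy heq
    have hP1 : 0 < (ε * x) ^ i₁ * (δ * y) ^ j₁ :=
      mul_pos (zpow_pos hεx _) (zpow_pos hδy _)
    have hP2 : 0 < (ε * x) ^ i₂ * (δ * y) ^ j₂ :=
      mul_pos (zpow_pos hεx _) (zpow_pos hδy _)
    have hP3 : 0 < (ε * x) ^ i₃ * (δ * y) ^ j₃ :=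
      mul_pos (zpow_pos hεx _) (zpow_pos hδy _)
    rw [key a₁ i₁ j₁ x y, key a₂ i₂ j₂ x y, key a₃ i₃ j₃ x y] at heq
    rcases hA0.lt_or_gt with hA | hA <;> rcases hB0.lt_or_gt with hB | hB <;>
      rcases hC0.lt_or_gt with hC | hC
    · nlinarith
    · exact sign_ne_aux C B hC hB h23.symm
    · exact sign_ne_aux B A hB hA h12.symm
    · exact sign_ne_aux B A hB hA h12.symm
    · exact sign_ne_aux A B hA hB h12
    · exact sign_ne_aux A B hA hB h12
    · exact sign_ne_aux B C hB hC h23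
    · nlinarith
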